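/- Let Σ be a symmetric positive semidefinite p×p real matrix with Σ_{jj} = 1 for all j, and let S ⊆ {1,…,p} be nonempty. Let Λ_min > 0 satisfy β_SᵀΣβ_S ≥ Λ_min²·‖β_S‖_2² for every β (so the S×S block Σ₁₁(S) is invertible). Let w_j ≥ 0 for j ∈ S and w_j > 0 for j ∉ S, with diagonal weight matrices W_S and W_{S^c}. If ‖w_S‖_2 < Λ_min · min_{j∉S} w_j, then the weighted irrepresentable condition holds for S: for every τ ∈ ℝ^S with ‖τ‖_∞ ≤ 1, ‖W_{S^c}^{−1}·Σ₂₁(S)·Σ₁₁(S)^{−1}·W_S·τ‖_∞ < 1. -/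

import Mathlib

open Finset Matrix

/-- Cauchy–Schwarz for the bilinear form of a real PSD matrix. -/
lemma cs_psd {n : Type*} [Fintype n] (A : Matrix n n ℝ) (h : A.PosSemidef)
    (x y : n → ℝ) :
    (x ⬝ᵥ A.mulVec y) ^ 2 ≤ (x ⬝ᵥ A.mulVec x) * (y ⬝ᵥ A.mulVec y) := by
  have hsym : Aᵀ = A := by
    have := h.1
    simpa [Matrix.IsHermitian] using this
  have hcomm : ∀ u v : n → ℝ, u ⬝ᵥ A.mulVec v = v ⬝ᵥ A.mulVec u := by
    intro u v
    rw [Matrix.dotProduct_mulVec, ← Matrix.mulVec_transpose, hsym, dotProduct_comm]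
  have key : ∀ t : ℝ,
      0 ≤ (y ⬝ᵥ A.mulVec y) * (t * t) + (2 * (x ⬝ᵥ A.mulVec y)) * t + (x ⬝ᵥ A.mulVec x) := by
    intro t
    have h0 := (posSemidef_iff_dotProduct_mulVec.mp h).2 (x + t • y)
    have hexp : (star (x + t • y)) ⬝ᵥ A.mulVec (x + t • y)
        = (x ⬝ᵥ A.mulVec x) + t * (x ⬝ᵥ A.mulVec y) + t * (y ⬝ᵥ A.mulVec x)
          + (t * t) * (y ⬝ᵥ A.mulVec y) := by
      simp only [star_trivial, Matrix.mulVec_add, Matrix.mulVec_smul, dotProduct_add,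
        add_dotProduct, dotProduct_smul, smul_dotProduct, smul_eq_mul]
      ring
    rw [hexp, hcomm y x] at h0
    linarith
  have hd := discrim_le_zero key
  rw [discrim] at hd
  nlinarith [hd]

set_option maxHeartbeats 1000000 in
/-- Lemma `boundirr`: if `‖w_S‖₂ < Λ_min · min_{j∉S} w_j` then the weighted
irrepresentable condition holds for `S`. -/
theorem sufficient_for_weighted_irrepresentable
    (p : ℕ)
    (Gram : Matrix (Fin p) (Fin p) ℝ)
    (hsym : Gram.IsSymm) (hpsd : Gram.PosSemidef)
    (hdiag : ∀ j, Gram j j = 1)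
    (S : Finset (Fin p)) (hS : S.Nonempty)
    (Λmin : ℝ) (hΛmin : 0 < Λmin)
    (hEig : ∀ β : Fin p → ℝ,
      Λmin ^ 2 * (∑ j ∈ S, (β j) ^ 2)
        ≤ (fun j => if j ∈ S then β j else 0) ⬝ᵥ
            Gram.mulVec (fun j => if j ∈ S then β j else 0))
    (w : Fin p → ℝ) (hwS : ∀ j ∈ S, 0 ≤ w j) (hwSc : ∀ j ∉ S, 0 < w j)
    (wmin : ℝ) (hwmin : ∀ j ∉ S, wmin ≤ w j)
    (hcond : Real.sqrt (∑ j ∈ S, (w j) ^ 2) < Λmin * wmin)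
    -- `Sig11` is the `S × S` block of `Gram`
    (Sig11 : Matrix {x // x ∈ S} {x // x ∈ S} ℝ)
    (hSig11 : ∀ a b : {x // x ∈ S}, Sig11 a b = Gram a.val b.val) :
    ∀ τ : {x // x ∈ S} → ℝ, (∀ k, |τ k| ≤ 1) →
      ∀ j ∉ S,
        |(w j)⁻¹ * ∑ k : {x // x ∈ S},
            Gram j k.val * (Sig11⁻¹.mulVec (fun a => w a.val * τ a)) k| < 1 := by
  intro τ hτ j hj
  classical
  -- basic positivity facts
  have hnw0 : 0 ≤ Real.sqrt (∑ j ∈ S, (w j) ^ 2) := Real.sqrt_nonneg _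
  have hwmin0 : 0 < wmin := by
    by_contra hw
    push_neg at hw
    nlinarith
  -- extension operator
  set ext : ({x // x ∈ S} → ℝ) → (Fin p → ℝ) :=
    fun x i => if h : i ∈ S then x ⟨i, h⟩ else 0 with hext
  have hext_if : ∀ (x : {x // x ∈ S} → ℝ),
      (fun i => if i ∈ S then ext x i else 0) = ext x := by
    intro x
    funext i
    by_cases h : i ∈ S <;> simp [hext, h]
  -- bridging sums over S and the subtype
  have hbridge : ∀ x : {x // x ∈ S} → ℝ,
      x ⬝ᵥ Sig11.mulVec x = (ext x) ⬝ᵥ Gram.mulVec (ext x) := by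
    intro x
    have hinner : ∀ i : Fin p, (Gram.mulVec (ext x)) i
        = ∑ k ∈ S.attach, Gram i k.val * x k := by
      intro i
      rw [Matrix.mulVec, dotProduct]
      rw [← Finset.sum_subset (Finset.subset_univ S)
        (fun k _ hk => by simp [hext, hk] : ∀ k ∈ Finset.univ, k ∉ S → Gram i k * ext x k = 0)]
      rw [← Finset.sum_attach S (fun k => Gram i k * ext x k)]
      exact Finset.sum_congr rfl (fun k _ => by simp [hext, k.2])
    calc x ⬝ᵥ Sig11.mulVec x
        = ∑ a ∈ S.attach, x a * ∑ b ∈ S.attach, Gram a.val b.val * x b := by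
          rw [dotProduct]
          rw [show (Finset.univ : Finset {x // x ∈ S}) = S.attach from rfl]
          refine Finset.sum_congr rfl (fun a _ => ?_)
          rw [Matrix.mulVec, dotProduct]
          rw [show (Finset.univ : Finset {x // x ∈ S}) = S.attach from rfl]
          congr 1
          exact Finset.sum_congr rfl (fun b _ => by rw [hSig11])
      _ = ∑ i ∈ S, ext x i * (Gram.mulVec (ext x)) i := by
          rw [← Finset.sum_attach S (fun i => ext x i * (Gram.mulVec (ext x)) i)]
          refine Finset.sum_congr rfl (fun a _ => ?_)
          rw [hinner a.val]
          simp [hext]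
      _ = (ext x) ⬝ᵥ Gram.mulVec (ext x) := by
          rw [dotProduct]
          rw [← Finset.sum_subset (Finset.subset_univ S)]
          intro k _ hk
          simp [hext, hk]
  have hsq : ∀ x : {x // x ∈ S} → ℝ,
      ∑ i ∈ S, (ext x i) ^ 2 = ∑ a : {x // x ∈ S}, (x a) ^ 2 := by
    intro x
    rw [show (Finset.univ : Finset {x // x ∈ S}) = S.attach from rfl,
      ← Finset.sum_attach S (fun i => (ext x i) ^ 2)]
    refine Finset.sum_congr rfl (fun a _ => ?_)
    simp [hext]
  -- the eigenvalue bound transported to the subtype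
  have hEig' : ∀ x : {x // x ∈ S} → ℝ,
      Λmin ^ 2 * (∑ a : {x // x ∈ S}, (x a) ^ 2) ≤ x ⬝ᵥ Sig11.mulVec x := by
    intro x
    have := hEig (ext x)
    rw [hext_if x] at this
    rw [hbridge x, ← hsq x]
    exact this
  -- Sig11 is positive definite, hence invertible
  have hSig11sym : Sig11ᵀ = Sig11 := by
    ext a b
    rw [Matrix.transpose_apply, hSig11, hSig11]
    have := congrFun (congrFun hsym b.val) a.val
    simpa [Matrix.transpose_apply] using this.symm
  have hPD : Sig11.PosDef := by
    refine posDef_iff_dotProduct_mulVec.mpr ⟨by simpa [Matrix.IsHermitian] using hSig11sym, fun x hx => ?_⟩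
    have h1 := hEig' x
    have h2 : 0 < ∑ a : {x // x ∈ S}, (x a) ^ 2 := by
      have hne : ∃ a, x a ≠ 0 := by
        by_contra hc
        push_neg at hc
        exact hx (funext hc)
      obtain ⟨a, ha⟩ := hne
      have : 0 < (x a) ^ 2 := by positivity
      exact lt_of_lt_of_le this (Finset.single_le_sum
        (fun b _ => sq_nonneg (x b)) (Finset.mem_univ a))
    have : 0 < Λmin ^ 2 * ∑ a : {x // x ∈ S}, (x a) ^ 2 := by positivity
    simpa using lt_of_lt_of_le this h1
  have hinv : Sig11 * Sig11⁻¹ = 1 :=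
    Matrix.mul_nonsing_inv Sig11 (isUnit_iff_ne_zero.mpr hPD.det_pos.ne')
  -- the vector v
  set wτ : {x // x ∈ S} → ℝ := fun a => w a.val * τ a with hwτ
  set v : {x // x ∈ S} → ℝ := Sig11⁻¹.mulVec wτ with hv
  have hSv : Sig11.mulVec v = wτ := by
    rw [hv, Matrix.mulVec_mulVec, hinv, Matrix.one_mulVec]
  -- quantities
  set Q : ℝ := v ⬝ᵥ Sig11.mulVec v with hQ
  set nv : ℝ := Real.sqrt (∑ a : {x // x ∈ S}, (v a) ^ 2) with hnv
  set nw : ℝ := Real.sqrt (∑ j ∈ S, (w j) ^ 2) with hnw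
  have hnv0 : 0 ≤ nv := Real.sqrt_nonneg _
  have hnvsq : nv ^ 2 = ∑ a : {x // x ∈ S}, (v a) ^ 2 :=
    Real.sq_sqrt (Finset.sum_nonneg fun a _ => sq_nonneg _)
  have hnwsq : nw ^ 2 = ∑ j ∈ S, (w j) ^ 2 :=
    Real.sq_sqrt (Finset.sum_nonneg fun a _ => sq_nonneg _)
  -- Q = v ⬝ wτ ≤ nv * nw
  have hQeq : Q = ∑ a : {x // x ∈ S}, v a * wτ a := by
    rw [hQ, hSv, dotProduct]
  have hQle : Q ≤ nv * nw := by
    rw [hQeq]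
    have h1 : ∀ a : {x // x ∈ S}, v a * wτ a ≤ |v a| * w a.val := by
      intro a
      have h2 : v a * wτ a ≤ |v a * wτ a| := le_abs_self _
      rw [abs_mul] at h2
      refine h2.trans ?_
      have : |wτ a| ≤ w a.val := by
        rw [hwτ, abs_mul, abs_of_nonneg (hwS a.val a.2)]
        nlinarith [hτ a, abs_nonneg (τ a), hwS a.val a.2]
      exact mul_le_mul_of_nonneg_left this (abs_nonneg _)
    refine (Finset.sum_le_sum (fun a _ => h1 a)).trans ?_
    have hcs := Finset.sum_mul_sq_le_sq_mul_sq Finset.univ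
      (fun a : {x // x ∈ S} => |v a|) (fun a => w a.val)
    have hsum : ∑ a : {x // x ∈ S}, (w a.val) ^ 2 = ∑ j ∈ S, (w j) ^ 2 := by
      rw [show (Finset.univ : Finset {x // x ∈ S}) = S.attach from rfl]
      exact Finset.sum_attach S (fun j => (w j) ^ 2)
    have hb : ∑ a : {x // x ∈ S}, |v a| * w a.val
        ≤ Real.sqrt ((∑ a : {x // x ∈ S}, |v a| ^ 2) * ∑ a : {x // x ∈ S}, (w a.val) ^ 2) := by
      exact Real.le_sqrt_of_sq_le hcs
    refine hb.trans ?_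
    rw [Real.sqrt_mul (Finset.sum_nonneg fun a _ => sq_nonneg _), hsum]
    simp only [sq_abs]
    rw [hnv, hnw]
  have hQlow : Λmin ^ 2 * nv ^ 2 ≤ Q := by
    rw [hnvsq]; exact hEig' v
  have hQ0 : 0 ≤ Q := le_trans (by positivity) hQlow
  -- bound on sqrt Q
  have hsqrtQ : Real.sqrt Q ≤ nw / Λmin := by
    have hnvle : Λmin ^ 2 * nv ≤ nw := by
      rcases eq_or_lt_of_le hnv0 with h | h
      · nlinarith [Real.sqrt_nonneg (∑ j ∈ S, (w j) ^ 2)]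
      · nlinarith [hQle, hQlow]
    have : Q ≤ nw ^ 2 / Λmin ^ 2 := by
      rw [le_div_iff₀ (by positivity : (0:ℝ) < Λmin ^ 2)]
      have h1 := mul_le_mul_of_nonneg_right hnvle hnw0
      have h2 := mul_le_mul_of_nonneg_left hQle (sq_nonneg Λmin)
      nlinarith [h1, h2]
    calc Real.sqrt Q ≤ Real.sqrt (nw ^ 2 / Λmin ^ 2) := Real.sqrt_le_sqrt this
      _ = nw / Λmin := by
          rw [show nw ^ 2 / Λmin ^ 2 = (nw / Λmin) ^ 2 by ring]
          exact Real.sqrt_sq (by positivity)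
  -- the sum T as a Gram pairing
  set T : ℝ := ∑ k : {x // x ∈ S}, Gram j k.val * v k with hT
  set ej : Fin p → ℝ := Pi.single j 1 with hej
  have hTeq : T = ej ⬝ᵥ Gram.mulVec (ext v) := by
    rw [hej, single_dotProduct, one_mul, Matrix.mulVec, dotProduct, hT]
    rw [← Finset.sum_subset (Finset.subset_univ S)
      (fun k _ hk => by simp [hext, hk] : ∀ k ∈ Finset.univ, k ∉ S → Gram j k * ext v k = 0)]
    rw [show (Finset.univ : Finset {x // x ∈ S}) = S.attach from rfl,
      ← Finset.sum_attach S (fun k => Gram j k * ext v k)]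
    exact Finset.sum_congr rfl (fun k _ => by simp [hext, k.2])
  have hejGram : ej ⬝ᵥ Gram.mulVec ej = 1 := by
    rw [hej]
    simp [Matrix.mulVec_single, single_dotProduct, hdiag j]
  have hTsq : T ^ 2 ≤ Q := by
    have hcs := cs_psd Gram hpsd ej (ext v)
    rw [← hTeq, hejGram, one_mul] at hcs
    rw [← hbridge v] at hcs
    exact hcs
  have hTabs : |T| ≤ nw / Λmin := by
    have : |T| = Real.sqrt (T ^ 2) := (Real.sqrt_sq_eq_abs T).symm
    rw [this]
    exact (Real.sqrt_le_sqrt hTsq).trans hsqrtQ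
  -- conclude
  have hwj : 0 < w j := hwSc j hj
  rw [abs_mul, abs_inv, abs_of_pos hwj]
  rw [inv_mul_lt_iff₀ hwj, mul_one]
  calc |T| ≤ nw / Λmin := hTabs
    _ < wmin := by
        rw [div_lt_iff₀ hΛmin]
        rw [hnw]
        nlinarith [hcond]
    _ ≤ w j := hwmin j hj
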